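/- Under the setup, curvature-one condition, and eigenvalue condition described in the context, assume in addition that R satisfies the first Bianchi identity, that μ1 ≤ μ2, and that λ1 ≤ λ2 in case μ1 = μ2. Fix unit vectors e1 ∈ σ1 and e2 ∈ σ2, set ē_i = Ae_i/μ_i and γ = R(e2, e1, ē1, ē2). Then λ1 ≤ 3γ + 1 ≤ λ2, and if equality holds in either inequality then λ1 = λ2 = 3γ + 1 and μ1 = μ2. -/

import Mathlib

open scoped RealInnerProductSpace

set_option maxHeartbeats 2000000

/-- In the two-invariant-planes setup with the curvature-one condition,
the eigenvalue condition, the first Bianchi identity, `μ1 ≤ μ2` and (`λ1 ≤ λ2` when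
`μ1 = μ2`): with `γ = R(e2,e1,ē1,ē2)` one has `λ1 ≤ 3γ + 1 ≤ λ2`, with equality in
either inequality only if `λ1 = λ2 = 3γ + 1` and `μ1 = μ2`. -/
theorem stmt_10
    {V : Type*} [NormedAddCommGroup V] [InnerProductSpace ℝ V] [FiniteDimensional ℝ V]
    (R : V →ₗ[ℝ] V →ₗ[ℝ] V →ₗ[ℝ] V →ₗ[ℝ] ℝ)
    (hskew : ∀ X Y Z W : V, R X Y Z W = - R Y X Z W)
    (hpair : ∀ X Y Z W : V, R X Y Z W = R Z W X Y)
    (hbianchi : ∀ X Y Z W : V, R X Y Z W + R Y Z X W + R Z X Y W = 0)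
    (σ1 σ2 : Submodule ℝ V)
    (hσ1 : Module.finrank ℝ σ1 = 2) (hσ2 : Module.finrank ℝ σ2 = 2)
    (horth : ∀ x ∈ σ1, ∀ y ∈ σ2, ⟪x, y⟫ = 0)
    (A : V →ₗ[ℝ] V)
    (hAskew : ∀ x y : V, ⟪A x, y⟫ = -⟪x, A y⟫)
    (hA1 : Submodule.map A σ1 = σ1) (hA2 : Submodule.map A σ2 = σ2)
    (μ1 μ2 : ℝ) (hμ1 : 0 < μ1) (hμ2 : 0 < μ2)
    (hAμ1 : ∀ x ∈ σ1, ‖A x‖ = μ1 * ‖x‖) (hAμ2 : ∀ x ∈ σ2, ‖A x‖ = μ2 * ‖x‖)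
    (lam1 lam2 : ℝ)
    (hlam1 : ∀ x ∈ σ1, ‖x‖ = 1 → R x (A x) (A x) x = lam1 * μ1 ^ 2)
    (hlam2 : ∀ x ∈ σ2, ‖x‖ = 1 → R x (A x) (A x) x = lam2 * μ2 ^ 2)
    (hcvc : ∀ v ∈ σ1 ⊔ σ2, ‖v‖ = 1 → ∀ w ∈ σ1 ⊔ σ2, ⟪w, v⟫ = 0 → ⟪w, A v⟫ = 0 →
      ∀ u ∈ σ1 ⊔ σ2, R w v v u = ⟪w, u⟫)
    (heigen : ∀ v ∈ σ1 ⊔ σ2, ‖v‖ = 1 →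
      1 < R v (A v) (A v) v / ‖A v‖ ^ 2 ∧
      ∀ u ∈ σ1 ⊔ σ2, R (A v) v v u = (R v (A v) (A v) v / ‖A v‖ ^ 2) * ⟪A v, u⟫)
    (hμ : μ1 ≤ μ2) (hord : μ1 = μ2 → lam1 ≤ lam2)
    (e1 : V) (he1 : e1 ∈ σ1) (he1u : ‖e1‖ = 1)
    (e2 : V) (he2 : e2 ∈ σ2) (he2u : ‖e2‖ = 1)
    (ebar1 ebar2 : V) (hebar1 : ebar1 = μ1⁻¹ • A e1) (hebar2 : ebar2 = μ2⁻¹ • A e2)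
    (γ : ℝ) (hγ : γ = R e2 e1 ebar1 ebar2) :
    (lam1 ≤ 3 * γ + 1 ∧ 3 * γ + 1 ≤ lam2) ∧
      ((lam1 = 3 * γ + 1 ∨ 3 * γ + 1 = lam2) →
        lam1 = 3 * γ + 1 ∧ lam2 = 3 * γ + 1 ∧ μ1 = μ2) := by
  have hμ1' : μ1 ≠ 0 := ne_of_gt hμ1
  have hμ2' : μ2 ≠ 0 := ne_of_gt hμ2
  -- symmetry helpers
  have h2skew : ∀ X Y Z W : V, R X Y Z W = - R X Y W Z := fun X Y Z W => by
    rw [hpair X Y Z W, hskew Z W X Y, hpair W Z X Y]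
  have hswap : ∀ X Y Z W : V, R X Y Z W = R Y X W Z := fun X Y Z W => by
    rw [hskew X Y Z W, h2skew Y X Z W, neg_neg]
  -- memberships
  have hAe1m : A e1 ∈ σ1 := by rw [← hA1]; exact Submodule.mem_map_of_mem he1
  have hAe2m : A e2 ∈ σ2 := by rw [← hA2]; exact Submodule.mem_map_of_mem he2
  have hb1m : ebar1 ∈ σ1 := by rw [hebar1]; exact Submodule.smul_mem _ _ hAe1m
  have hb2m : ebar2 ∈ σ2 := by rw [hebar2]; exact Submodule.smul_mem _ _ hAe2m
  have me1 : e1 ∈ σ1 ⊔ σ2 := Submodule.mem_sup_left he1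
  have mb1 : ebar1 ∈ σ1 ⊔ σ2 := Submodule.mem_sup_left hb1m
  have me2 : e2 ∈ σ1 ⊔ σ2 := Submodule.mem_sup_right he2
  have mb2 : ebar2 ∈ σ1 ⊔ σ2 := Submodule.mem_sup_right hb2m
  -- A relations
  have hAe1 : A e1 = μ1 • ebar1 := by
    rw [hebar1, smul_smul, mul_inv_cancel₀ hμ1', one_smul]
  have hAe2 : A e2 = μ2 • ebar2 := by
    rw [hebar2, smul_smul, mul_inv_cancel₀ hμ2', one_smul]
  have hnAe1 : ‖A e1‖ = μ1 := by rw [hAμ1 e1 he1, he1u, mul_one]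
  have hnAe2 : ‖A e2‖ = μ2 := by rw [hAμ2 e2 he2, he2u, mul_one]
  have hb1u : ‖ebar1‖ = 1 := by
    rw [hebar1, norm_smul, hnAe1, norm_inv, Real.norm_eq_abs, abs_of_pos hμ1,
      inv_mul_cancel₀ hμ1']
  have hb2u : ‖ebar2‖ = 1 := by
    rw [hebar2, norm_smul, hnAe2, norm_inv, Real.norm_eq_abs, abs_of_pos hμ2,
      inv_mul_cancel₀ hμ2']
  -- skew basics
  have hxAx : ∀ x : V, ⟪x, A x⟫ = 0 := fun x => by
    have h := hAskew x x
    rw [real_inner_comm x (A x)] at h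
    linarith
  -- inner product facts
  have i11 : ⟪e1, e1⟫ = 1 := by rw [real_inner_self_eq_norm_mul_norm, he1u, mul_one]
  have i22 : ⟪e2, e2⟫ = 1 := by rw [real_inner_self_eq_norm_mul_norm, he2u, mul_one]
  have i_b1b1 : ⟪ebar1, ebar1⟫ = 1 := by
    rw [real_inner_self_eq_norm_mul_norm, hb1u, mul_one]
  have i_b2b2 : ⟪ebar2, ebar2⟫ = 1 := by
    rw [real_inner_self_eq_norm_mul_norm, hb2u, mul_one]
  have io' : ∀ y ∈ σ2, ∀ x ∈ σ1, ⟪y, x⟫ = 0 := fun y hy x hx => by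
    rw [real_inner_comm]; exact horth x hx y hy
  have i_e1e2 : ⟪e1, e2⟫ = 0 := horth e1 he1 e2 he2
  have i_e2e1 : ⟪e2, e1⟫ = 0 := io' e2 he2 e1 he1
  have i_e1b2 : ⟪e1, ebar2⟫ = 0 := horth e1 he1 ebar2 hb2m
  have i_b2e1 : ⟪ebar2, e1⟫ = 0 := io' ebar2 hb2m e1 he1
  have i_b1e2 : ⟪ebar1, e2⟫ = 0 := horth ebar1 hb1m e2 he2
  have i_e2b1 : ⟪e2, ebar1⟫ = 0 := io' e2 he2 ebar1 hb1m
  have i_b1b2 : ⟪ebar1, ebar2⟫ = 0 := horth ebar1 hb1m ebar2 hb2m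
  have i_b2b1 : ⟪ebar2, ebar1⟫ = 0 := io' ebar2 hb2m ebar1 hb1m
  have i_e1b1 : ⟪e1, ebar1⟫ = 0 := by
    rw [hebar1, real_inner_smul_right, hxAx e1, mul_zero]
  have i_b1e1 : ⟪ebar1, e1⟫ = 0 := by rw [real_inner_comm]; exact i_e1b1
  have i_e2b2 : ⟪e2, ebar2⟫ = 0 := by
    rw [hebar2, real_inner_smul_right, hxAx e2, mul_zero]
  have i_b2e2 : ⟪ebar2, e2⟫ = 0 := by rw [real_inner_comm]; exact i_e2b2
  -- A² facts
  have hAAe1 : A (A e1) = -((μ1 ^ 2) • e1) := by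
    have h1 : ⟪A (A e1), A (A e1)⟫ = μ1 ^ 4 := by
      have hn : ‖A (A e1)‖ = μ1 * μ1 := by rw [hAμ1 _ hAe1m, hnAe1]
      rw [real_inner_self_eq_norm_mul_norm, hn]; ring
    have h2 : ⟪A (A e1), e1⟫ = -(μ1 ^ 2) := by
      rw [hAskew (A e1) e1, real_inner_self_eq_norm_mul_norm, hnAe1]; ring
    have hz : (⟪A (A e1) + (μ1 ^ 2) • e1, A (A e1) + (μ1 ^ 2) • e1⟫ : ℝ) = 0 := by
      rw [real_inner_add_add_self]
      simp only [real_inner_smul_left, real_inner_smul_right]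
      rw [h1, h2, i11]; ring
    exact eq_neg_of_add_eq_zero_left (inner_self_eq_zero.mp hz)
  have hAAe2 : A (A e2) = -((μ2 ^ 2) • e2) := by
    have h1 : ⟪A (A e2), A (A e2)⟫ = μ2 ^ 4 := by
      have hn : ‖A (A e2)‖ = μ2 * μ2 := by rw [hAμ2 _ hAe2m, hnAe2]
      rw [real_inner_self_eq_norm_mul_norm, hn]; ring
    have h2 : ⟪A (A e2), e2⟫ = -(μ2 ^ 2) := by
      rw [hAskew (A e2) e2, real_inner_self_eq_norm_mul_norm, hnAe2]; ring
    have hz : (⟪A (A e2) + (μ2 ^ 2) • e2, A (A e2) + (μ2 ^ 2) • e2⟫ : ℝ) = 0 := by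
      rw [real_inner_add_add_self]
      simp only [real_inner_smul_left, real_inner_smul_right]
      rw [h1, h2, i22]; ring
    exact eq_neg_of_add_eq_zero_left (inner_self_eq_zero.mp hz)
  have hAb1 : A ebar1 = (-μ1) • e1 := by
    rw [hebar1, map_smul, hAAe1, smul_neg, smul_smul, sq, inv_mul_cancel_left₀ hμ1',
      ← neg_smul]
  have hAb2 : A ebar2 = (-μ2) • e2 := by
    rw [hebar2, map_smul, hAAe2, smul_neg, smul_smul, sq, inv_mul_cancel_left₀ hμ2',
      ← neg_smul]
  have hAb1m : A ebar1 ∈ σ1 := by rw [← hA1]; exact Submodule.mem_map_of_mem hb1m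
  have hAb2m : A ebar2 ∈ σ2 := by rw [← hA2]; exact Submodule.mem_map_of_mem hb2m
  have hnAb1 : ‖A ebar1‖ = μ1 := by rw [hAμ1 ebar1 hb1m, hb1u, mul_one]
  have hnAb2 : ‖A ebar2‖ = μ2 := by rw [hAμ2 ebar2 hb2m, hb2u, mul_one]
  -- eigenvalue lemmas
  have hd1 : lam1 * μ1 ^ 2 / μ1 ^ 2 = lam1 := by field_simp
  have hd2 : lam2 * μ2 ^ 2 / μ2 ^ 2 = lam2 := by field_simp
  have Ea : ∀ u ∈ σ1 ⊔ σ2, R ebar1 e1 e1 u = lam1 * ⟪ebar1, u⟫ := by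
    intro u hu
    have h := (heigen e1 me1 he1u).2 u hu
    rw [hlam1 e1 he1 he1u, hnAe1, hd1, hAe1] at h
    simp only [map_smul, LinearMap.smul_apply, smul_eq_mul, real_inner_smul_left] at h
    exact mul_left_cancel₀ hμ1' (by linear_combination h)
  have Ec : ∀ u ∈ σ1 ⊔ σ2, R ebar2 e2 e2 u = lam2 * ⟪ebar2, u⟫ := by
    intro u hu
    have h := (heigen e2 me2 he2u).2 u hu
    rw [hlam2 e2 he2 he2u, hnAe2, hd2, hAe2] at h
    simp only [map_smul, LinearMap.smul_apply, smul_eq_mul, real_inner_smul_left] at h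
    exact mul_left_cancel₀ hμ2' (by linear_combination h)
  have c01 : R ebar1 e1 e1 ebar1 = lam1 := by rw [Ea ebar1 mb1, i_b1b1, mul_one]
  have c16 : R ebar2 e2 e2 ebar2 = lam2 := by rw [Ec ebar2 mb2, i_b2b2, mul_one]
  have Eb : ∀ u ∈ σ1 ⊔ σ2, R e1 ebar1 ebar1 u = lam1 * ⟪e1, u⟫ := by
    intro u hu
    have h := (heigen ebar1 mb1 hb1u).2 u hu
    have hq : R ebar1 (A ebar1) (A ebar1) ebar1 = lam1 * μ1 ^ 2 := by
      rw [hAb1]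
      simp only [map_smul, LinearMap.smul_apply, smul_eq_mul]
      rw [c01]; ring
    rw [hq, hnAb1, hd1, hAb1] at h
    simp only [map_smul, LinearMap.smul_apply, smul_eq_mul, real_inner_smul_left] at h
    exact mul_left_cancel₀ (neg_ne_zero.mpr hμ1') (by linear_combination h)
  have Ed : ∀ u ∈ σ1 ⊔ σ2, R e2 ebar2 ebar2 u = lam2 * ⟪e2, u⟫ := by
    intro u hu
    have h := (heigen ebar2 mb2 hb2u).2 u hu
    have hq : R ebar2 (A ebar2) (A ebar2) ebar2 = lam2 * μ2 ^ 2 := by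
      rw [hAb2]
      simp only [map_smul, LinearMap.smul_apply, smul_eq_mul]
      rw [c16]; ring
    rw [hq, hnAb2, hd2, hAb2] at h
    simp only [map_smul, LinearMap.smul_apply, smul_eq_mul, real_inner_smul_left] at h
    exact mul_left_cancel₀ (neg_ne_zero.mpr hμ2') (by linear_combination h)
  have hl1 : 1 < lam1 := by
    have h := (heigen e1 me1 he1u).1
    rwa [hlam1 e1 he1 he1u, hnAe1, hd1] at h
  -- curvature-one instances
  have Ca : ∀ u ∈ σ1 ⊔ σ2, R e2 e1 e1 u = ⟪e2, u⟫ :=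
    hcvc e1 me1 he1u e2 me2 (io' e2 he2 e1 he1) (io' e2 he2 (A e1) hAe1m)
  have Cb : ∀ u ∈ σ1 ⊔ σ2, R ebar2 e1 e1 u = ⟪ebar2, u⟫ :=
    hcvc e1 me1 he1u ebar2 mb2 (io' ebar2 hb2m e1 he1) (io' ebar2 hb2m (A e1) hAe1m)
  have Cc : ∀ u ∈ σ1 ⊔ σ2, R e2 ebar1 ebar1 u = ⟪e2, u⟫ :=
    hcvc ebar1 mb1 hb1u e2 me2 (io' e2 he2 ebar1 hb1m) (io' e2 he2 (A ebar1) hAb1m)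
  have Cd : ∀ u ∈ σ1 ⊔ σ2, R ebar2 ebar1 ebar1 u = ⟪ebar2, u⟫ :=
    hcvc ebar1 mb1 hb1u ebar2 mb2 (io' ebar2 hb2m ebar1 hb1m) (io' ebar2 hb2m (A ebar1) hAb1m)
  have Ce : ∀ u ∈ σ1 ⊔ σ2, R e1 e2 e2 u = ⟪e1, u⟫ :=
    hcvc e2 me2 he2u e1 me1 (horth e1 he1 e2 he2) (horth e1 he1 (A e2) hAe2m)
  have Cf : ∀ u ∈ σ1 ⊔ σ2, R ebar1 e2 e2 u = ⟪ebar1, u⟫ :=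
    hcvc e2 me2 he2u ebar1 mb1 (horth ebar1 hb1m e2 he2) (horth ebar1 hb1m (A e2) hAe2m)
  have Cg : ∀ u ∈ σ1 ⊔ σ2, R e1 ebar2 ebar2 u = ⟪e1, u⟫ :=
    hcvc ebar2 mb2 hb2u e1 me1 (horth e1 he1 ebar2 hb2m) (horth e1 he1 (A ebar2) hAb2m)
  have Ch : ∀ u ∈ σ1 ⊔ σ2, R ebar1 ebar2 ebar2 u = ⟪ebar1, u⟫ :=
    hcvc ebar2 mb2 hb2u ebar1 mb1 (horth ebar1 hb1m ebar2 hb2m) (horth ebar1 hb1m (A ebar2) hAb2m)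
  -- component values
  have c02 : R ebar1 e1 e2 ebar1 = 0 := by
    rw [hpair ebar1 e1 e2 ebar1, Cc e1 me1, i_e2e1]
  have c03 : R ebar1 e2 e1 ebar1 = 0 := by
    rw [hpair ebar1 e2 e1 ebar1, Eb e2 me2, i_e1e2, mul_zero]
  have c04 : R ebar1 e2 e2 ebar1 = 1 := by rw [Cf ebar1 mb1, i_b1b1]
  have c05 : R ebar2 e1 e1 ebar1 = 0 := by rw [Cb ebar1 mb1, i_b2b1]
  have c06 : R ebar2 e1 e2 ebar1 = R ebar1 e2 e1 ebar2 := by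
    rw [hswap ebar2 e1 e2 ebar1, hpair e1 ebar2 ebar1 e2]
  have c07 : R ebar2 e2 e1 ebar1 = R ebar1 e1 e2 ebar2 := by
    rw [hswap ebar2 e2 e1 ebar1, hpair e2 ebar2 ebar1 e1]
  have c08 : R ebar2 e2 e2 ebar1 = 0 := by rw [Ec ebar1 mb1, i_b2b1, mul_zero]
  have c09 : R ebar1 e1 e1 ebar2 = 0 := by rw [Ea ebar2 mb2, i_b1b2, mul_zero]
  have c12 : R ebar1 e2 e2 ebar2 = 0 := by rw [Cf ebar2 mb2, i_b1b2]
  have c13 : R ebar2 e1 e1 ebar2 = 1 := by rw [Cb ebar2 mb2, i_b2b2]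
  have c14 : R ebar2 e1 e2 ebar2 = 0 := by
    rw [hpair ebar2 e1 e2 ebar2, Ed e1 me1, i_e2e1, mul_zero]
  have c15 : R ebar2 e2 e1 ebar2 = 0 := by
    rw [hpair ebar2 e2 e1 ebar2, Cg e2 me2, i_e1e2]
  have c17 : R ebar1 e1 ebar2 ebar1 = 0 := by
    rw [hpair ebar1 e1 ebar2 ebar1, Cd e1 me1, i_b2e1]
  have c18 : R ebar1 ebar2 e1 ebar1 = 0 := by
    rw [hpair ebar1 ebar2 e1 ebar1, Eb ebar2 mb2, i_e1b2, mul_zero]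
  have c19 : R ebar1 ebar2 ebar2 ebar1 = 1 := by rw [Ch ebar1 mb1, i_b1b1]
  have c20 : R e2 e1 e1 ebar1 = 0 := by rw [Ca ebar1 mb1, i_e2b1]
  have c21 : R e2 e1 ebar2 ebar1 = -γ := by rw [h2skew e2 e1 ebar2 ebar1, ← hγ]
  have c22 : R e2 ebar2 e1 ebar1 = - R ebar1 e1 e2 ebar2 := by
    rw [hpair e2 ebar2 e1 ebar1, hskew e1 ebar1 e2 ebar2]
  have c23 : R e2 ebar2 ebar2 ebar1 = 0 := by rw [Ed ebar1 mb1, i_e2b1, mul_zero]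
  -- the three key scalar equations
  obtain ⟨a, ha2⟩ : ∃ a : ℝ, a ^ 2 = 1 / 2 :=
    ⟨Real.sqrt 2 / 2, by rw [div_pow, Real.sq_sqrt (by norm_num : (0:ℝ) ≤ 2)]; norm_num⟩
  -- family 1 : v = a•e1 + a•e2, w = μ2•ebar1 - μ1•ebar2
  have hv1m : a • e1 + a • e2 ∈ σ1 ⊔ σ2 :=
    Submodule.add_mem _ (Submodule.mem_sup_left (Submodule.smul_mem _ _ he1))
      (Submodule.mem_sup_right (Submodule.smul_mem _ _ he2))
  have hv1i : (⟪a • e1 + a • e2, a • e1 + a • e2⟫ : ℝ) = 1 := by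
    simp only [inner_add_left, inner_add_right, real_inner_smul_left, real_inner_smul_right,
      i11, i22, i_e1e2, i_e2e1]
    linear_combination 2 * ha2
  have hv1u : ‖a • e1 + a • e2‖ = 1 := by
    rw [norm_eq_sqrt_real_inner, hv1i, Real.sqrt_one]
  have hw1m : μ2 • ebar1 - μ1 • ebar2 ∈ σ1 ⊔ σ2 :=
    Submodule.sub_mem _ (Submodule.mem_sup_left (Submodule.smul_mem _ _ hb1m))
      (Submodule.mem_sup_right (Submodule.smul_mem _ _ hb2m))
  have hw1v1 : (⟪μ2 • ebar1 - μ1 • ebar2, a • e1 + a • e2⟫ : ℝ) = 0 := by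
    simp only [inner_sub_left, inner_add_right, real_inner_smul_left, real_inner_smul_right,
      i_b1e1, i_b1e2, i_b2e1, i_b2e2]
    ring
  have hAv1 : A (a • e1 + a • e2) = (a * μ1) • ebar1 + (a * μ2) • ebar2 := by
    rw [map_add, map_smul, map_smul, hAe1, hAe2, smul_smul, smul_smul]
  have hw1Av1 : (⟪μ2 • ebar1 - μ1 • ebar2, A (a • e1 + a • e2)⟫ : ℝ) = 0 := by
    rw [hAv1]
    simp only [inner_sub_left, inner_add_right, real_inner_smul_left, real_inner_smul_right,
      i_b1b1, i_b1b2, i_b2b1, i_b2b2]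
    ring
  have h1 := hcvc _ hv1m hv1u _ hw1m hw1v1 hw1Av1 ebar1 mb1
  have h2 := hcvc _ hv1m hv1u _ hw1m hw1v1 hw1Av1 ebar2 mb2
  have hR : ∀ Y Z W : V, R (μ2 • ebar1 - μ1 • ebar2) Y Z W
      = μ2 * R ebar1 Y Z W - μ1 * R ebar2 Y Z W := fun Y Z W => by
    rw [hpair _ Y Z W, hpair ebar1 Y Z W, hpair ebar2 Y Z W]
    simp only [map_sub, map_smul, LinearMap.sub_apply, LinearMap.smul_apply, smul_eq_mul]
  simp only [hR, map_add, map_smul, map_sub, LinearMap.add_apply, LinearMap.smul_apply,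
    LinearMap.sub_apply, smul_eq_mul, inner_sub_left, real_inner_smul_left] at h1 h2
  rw [c01, c02, c03, c04, c05, c06, c07, c08, i_b1b1, i_b2b1] at h1
  rw [c09, c12, c13, c14, c15, c16, i_b1b2, i_b2b2] at h2
  have E1 : μ2 * (lam1 - 1) = μ1 * (R ebar1 e1 e2 ebar2 + R ebar1 e2 e1 ebar2) := by
    linear_combination 2 * h1 -
      2 * (μ2 * (lam1 + 1) - μ1 * (R ebar1 e1 e2 ebar2 + R ebar1 e2 e1 ebar2)) * ha2
  have E2 : μ2 * (R ebar1 e1 e2 ebar2 + R ebar1 e2 e1 ebar2) = μ1 * (lam2 - 1) := by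
    linear_combination 2 * h2 -
      2 * (μ2 * (R ebar1 e1 e2 ebar2 + R ebar1 e2 e1 ebar2) - μ1 * (1 + lam2)) * ha2
  clear h1 h2
  -- family 2 : v = a•e1 + a•ebar2, w = μ2•ebar1 + μ1•e2
  have hv2m : a • e1 + a • ebar2 ∈ σ1 ⊔ σ2 :=
    Submodule.add_mem _ (Submodule.mem_sup_left (Submodule.smul_mem _ _ he1))
      (Submodule.mem_sup_right (Submodule.smul_mem _ _ hb2m))
  have hv2i : (⟪a • e1 + a • ebar2, a • e1 + a • ebar2⟫ : ℝ) = 1 := by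
    simp only [inner_add_left, inner_add_right, real_inner_smul_left, real_inner_smul_right,
      i11, i_b2b2, i_e1b2, i_b2e1]
    linear_combination 2 * ha2
  have hv2u : ‖a • e1 + a • ebar2‖ = 1 := by
    rw [norm_eq_sqrt_real_inner, hv2i, Real.sqrt_one]
  have hw2m : μ2 • ebar1 + μ1 • e2 ∈ σ1 ⊔ σ2 :=
    Submodule.add_mem _ (Submodule.mem_sup_left (Submodule.smul_mem _ _ hb1m))
      (Submodule.mem_sup_right (Submodule.smul_mem _ _ he2))
  have hw2v2 : (⟪μ2 • ebar1 + μ1 • e2, a • e1 + a • ebar2⟫ : ℝ) = 0 := by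
    simp only [inner_add_left, inner_add_right, real_inner_smul_left, real_inner_smul_right,
      i_b1e1, i_b1b2, i_e2e1, i_e2b2]
    ring
  have hAv2 : A (a • e1 + a • ebar2) = (a * μ1) • ebar1 + (a * -μ2) • e2 := by
    rw [map_add, map_smul, map_smul, hAe1, hAb2, smul_smul, smul_smul]
  have hw2Av2 : (⟪μ2 • ebar1 + μ1 • e2, A (a • e1 + a • ebar2)⟫ : ℝ) = 0 := by
    rw [hAv2]
    simp only [inner_add_left, inner_add_right, real_inner_smul_left, real_inner_smul_right,
      i_b1b1, i_b1e2, i_e2b1, i22]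
    ring
  have h3 := hcvc _ hv2m hv2u _ hw2m hw2v2 hw2Av2 ebar1 mb1
  simp only [map_add, map_smul, LinearMap.add_apply, LinearMap.smul_apply,
    smul_eq_mul, inner_add_left, real_inner_smul_left] at h3
  rw [c01, c17, c18, c19, c20, c21, c22, c23, i_b1b1, i_e2b1] at h3
  have E3 : μ2 * (lam1 - 1) = μ1 * (γ + R ebar1 e1 e2 ebar2) := by
    linear_combination 2 * h3 -
      2 * (μ2 * (lam1 + 1) - μ1 * (γ + R ebar1 e1 e2 ebar2)) * ha2
  clear h3
  -- Bianchi
  have hB : R ebar1 e1 e2 ebar2 = γ + R ebar1 e2 e1 ebar2 := by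
    have hb := hbianchi ebar1 e1 e2 ebar2
    rw [hskew e1 e2 ebar1 ebar2, hskew e2 ebar1 e1 ebar2, ← hγ] at hb
    linarith only [hb]
  -- conclusion
  have hy : R ebar1 e2 e1 ebar2 = γ := by
    have h := E1.symm.trans E3
    exact mul_left_cancel₀ hμ1' (show μ1 * R ebar1 e2 e1 ebar2 = μ1 * γ by linear_combination h)
  have K1 : μ2 * (lam1 - 1) = μ1 * (3 * γ) := by
    linear_combination E1 + μ1 * hB + 2 * μ1 * hy
  have K2 : μ1 * (lam2 - 1) = μ2 * (3 * γ) := by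
    linear_combination (-1 : ℝ) * E2 + μ2 * hB + 2 * μ2 * hy
  have hpos : 0 < μ1 * (3 * γ) := by
    rw [← K1]; exact mul_pos hμ2 (by linarith)
  have h3γ : 0 < 3 * γ := by
    by_contra hne
    push_neg at hne
    have h0 : μ1 * (3 * γ) ≤ μ1 * 0 := mul_le_mul_of_nonneg_left hne hμ1.le
    rw [mul_zero] at h0
    linarith only [h0, hpos]
  have hstep : μ1 * (3 * γ) ≤ μ2 * (3 * γ) := mul_le_mul_of_nonneg_right hμ h3γ.le
  have g1 : lam1 ≤ 3 * γ + 1 := by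
    have h' : μ2 * (lam1 - 1) ≤ μ2 * (3 * γ) := by rw [K1]; exact hstep
    have h'' := le_of_mul_le_mul_left h' hμ2
    linarith only [h'']
  have g2 : 3 * γ + 1 ≤ lam2 := by
    have h' : μ1 * (3 * γ) ≤ μ1 * (lam2 - 1) := by rw [K2]; exact hstep
    have h'' := le_of_mul_le_mul_left h' hμ1
    linarith only [h'']
  refine ⟨⟨g1, g2⟩, ?_⟩
  rintro (h | h)
  · have hμeq : μ1 = μ2 := by
      have h1' : μ2 * (3 * γ) = μ1 * (3 * γ) := by rw [← K1, h]; ring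
      exact (mul_right_cancel₀ (ne_of_gt h3γ) h1').symm
    have hlam2e : lam2 = 3 * γ + 1 := by
      have hk := K2
      rw [hμeq] at hk
      have := mul_left_cancel₀ hμ2' hk
      linarith only [this]
    exact ⟨h, hlam2e, hμeq⟩
  · have hμeq : μ1 = μ2 := by
      have h1' : μ1 * (3 * γ) = μ2 * (3 * γ) := by rw [← K2, ← h]; ring
      exact mul_right_cancel₀ (ne_of_gt h3γ) h1'
    have hlam1e : lam1 = 3 * γ + 1 := by
      have hk := K1
      rw [← hμeq] at hk
      have := mul_left_cancel₀ hμ1' hk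
      linarith only [this]
    exact ⟨hlam1e, h.symm, hμeq⟩
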